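/- Let A be a randomized mechanism satisfying kε-differential privacy at the word level, i.e., for any two inputs x₁, x₂ differing in exactly one coordinate and any event S, Pr[A(x₁) = S] ≤ e^{kε} Pr[A(x₂) = S]. Apply random coordinate-wise dropout I_n where each coordinate is zeroed independently with probability μ ∈ [0,1], producing x̃ = x ⊙ I_n. Then the composed mechanism x ↦ A(x ⊙ I_n) satisfies ε'-word-level DP with ε' = ln((1-μ)·e^{kε} + μ). -/

import Mathlib

set_option maxHeartbeats 1000000


open MeasureTheory Finset

/-- Two vectors are word-adjacent if they differ in exactly one coordinate. -/
def AdjOne {d : ℕ} (x₁ x₂ : Fin d → ℝ) : Prop :=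
  ∃ i, x₁ i ≠ x₂ i ∧ ∀ j, j ≠ i → x₁ j = x₂ j

/-- The mechanism obtained by first applying coordinate-wise i.i.d. dropout with
rate `μ` (each coordinate zeroed with probability `μ`) and then running `A`:
the output distribution is the mixture over dropout patterns. -/
noncomputable def dropoutMechanism {d : ℕ} {Ω : Type*} [MeasurableSpace Ω]
    (A : (Fin d → ℝ) → Measure Ω) (μ : ℝ) (x : Fin d → ℝ) : Measure Ω :=
  ∑ I : Fin d → Bool,
    (∏ i, if I i then ENNReal.ofReal (1 - μ) else ENNReal.ofReal μ) •
      A (fun i => if I i then x i else 0)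

/-- Key arithmetic lemma in `ℝ≥0∞`: the subsampling mixture bound. -/
lemma dropout_key (p m E a₁ a₂ b : ENNReal) (hpm : p + m = 1) (hE : 1 ≤ E)
    (h1 : a₁ ≤ E * a₂) (h2 : a₁ ≤ E * b) :
    p * a₁ + m * b ≤ (p * E + m) * (p * a₂ + m * b) := by
  rcases le_total b a₂ with hb | hb
  · calc p * a₁ + m * b ≤ p * (E * b) + m * b := by gcongr
      _ = (p * E + m) * b := by ring
      _ ≤ (p * E + m) * (p * a₂ + m * b) := by
          apply mul_le_mul_right
          calc b = (p + m) * b := by rw [hpm, one_mul]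
            _ = p * b + m * b := by ring
            _ ≤ p * a₂ + m * b := by gcongr
  · obtain ⟨c, rfl⟩ : ∃ c, b = a₂ + c := ⟨b - a₂, (add_tsub_cancel_of_le hb).symm⟩
    have hkey : p * a₂ + m * (a₂ + c) = a₂ + m * c := by
      rw [show p * a₂ + m * (a₂ + c) = (p + m) * a₂ + m * c from by ring, hpm, one_mul]
    have hp : p ≤ p * E := le_mul_of_one_le_right' hE
    calc p * a₁ + m * (a₂ + c) ≤ p * (E * a₂) + m * (a₂ + c) := by gcongr
      _ = p * E * a₂ + m * a₂ + (p + m) * (m * c) := by rw [hpm]; ring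
      _ ≤ p * E * a₂ + m * a₂ + (p * E + m) * (m * c) := by gcongr
      _ = (p * E + m) * (a₂ + m * c) := by ring
      _ = (p * E + m) * (p * a₂ + m * (a₂ + c)) := by rw [hkey]

/-- Revised Theorem 2 of Lyu et al. (privacy amplification by dropout):
if `A` is `kε`-word-level DP, then composing with dropout at rate `μ` is
`ε'`-word-level DP with `ε' = ln((1-μ)·e^{kε} + μ)`. -/
theorem dropout_amplification {d : ℕ} {Ω : Type*} [MeasurableSpace Ω]
    (A : (Fin d → ℝ) → Measure Ω) (k : ℕ) (ε μ : ℝ) (hk : 1 ≤ k) (hε : 0 < ε)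
    (hμ : μ ∈ Set.Icc (0:ℝ) 1)
    (hDP : ∀ x₁ x₂, AdjOne x₁ x₂ → ∀ S : Set Ω,
      A x₁ S ≤ ENNReal.ofReal (Real.exp (k * ε)) * A x₂ S) :
    ∀ x₁ x₂, AdjOne x₁ x₂ → ∀ S : Set Ω,
      dropoutMechanism A μ x₁ S ≤
        ENNReal.ofReal (Real.exp (Real.log ((1 - μ) * Real.exp (k * ε) + μ))) *
          dropoutMechanism A μ x₂ S := by
  obtain ⟨hμ0, hμ1⟩ := hμ
  intro x₁ x₂ hadj S
  obtain ⟨i, hne, hoff⟩ := hadj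
  set P := ENNReal.ofReal (1 - μ) with hP
  set M := ENNReal.ofReal μ with hM
  set E := ENNReal.ofReal (Real.exp (k * ε)) with hEdef
  have hkε : (0:ℝ) ≤ (k:ℝ) * ε := by positivity
  have hexp1 : (1:ℝ) ≤ Real.exp ((k:ℝ) * ε) := Real.one_le_exp hkε
  have hE1 : 1 ≤ E := by
    rw [hEdef, ← ENNReal.ofReal_one]; exact ENNReal.ofReal_le_ofReal hexp1
  have hPM : P + M = 1 := by
    rw [hP, hM, ← ENNReal.ofReal_add (by linarith) hμ0]
    norm_num
  have hconst : ENNReal.ofReal (Real.exp (Real.log ((1 - μ) * Real.exp (k * ε) + μ)))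
      = P * E + M := by
    rw [Real.exp_log (by nlinarith), ENNReal.ofReal_add (by nlinarith) hμ0,
      ENNReal.ofReal_mul (by linarith)]
  rw [hconst]
  -- notation
  set D : (Fin d → ℝ) → (Fin d → Bool) → (Fin d → ℝ) :=
    fun x I j => if I j then x j else 0 with hD
  have hmech : ∀ x, dropoutMechanism A μ x S
      = ∑ I : Fin d → Bool, (∏ j, if I j then P else M) * A (D x I) S := by
    intro x
    simp [dropoutMechanism, MeasureTheory.Measure.finset_sum_apply,
      MeasureTheory.Measure.smul_apply, smul_eq_mul, hD, hP, hM]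
  set e := Equiv.funSplitAt i Bool with he
  have hsymm : ∀ (b : Bool) (g : {j : Fin d // j ≠ i} → Bool) (j : Fin d),
      e.symm (b, g) j = if h : j = i then b else g ⟨j, h⟩ := by
    intro b g j
    simp [he, Equiv.funSplitAt, Equiv.piSplitAt]
  -- weight factorization
  set W : ({j : Fin d // j ≠ i} → Bool) → ENNReal :=
    fun g => ∏ j ∈ ({i}ᶜ : Finset (Fin d)), (if e.symm (true, g) j then P else M) with hW
  have hweight : ∀ (b : Bool) (g : {j : Fin d // j ≠ i} → Bool),
      (∏ j, if e.symm (b, g) j then P else M) = (if b then P else M) * W g := by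
    intro b g
    rw [Fintype.prod_eq_mul_prod_compl i]
    congr 1
    · rw [hsymm b g i]; simp
    · apply Finset.prod_congr rfl
      intro j hj
      have hji : j ≠ i := by simpa using hj
      rw [hsymm b g j, hsymm true g j, dif_neg hji, dif_neg hji]
  -- the mixture decomposition
  have hsum : ∀ x, dropoutMechanism A μ x S
      = ∑ g : {j : Fin d // j ≠ i} → Bool,
          (P * W g * A (D x (e.symm (true, g))) S
            + M * W g * A (D x (e.symm (false, g))) S) := by
    intro x
    rw [hmech x, ← Equiv.sum_comp e.symm
      (fun I => (∏ j, if I j then P else M) * A (D x I) S), Fintype.sum_prod_type,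
      Fintype.sum_bool, ← Finset.sum_add_distrib]
    apply Finset.sum_congr rfl
    intro g _
    rw [hweight true g, hweight false g]
    norm_num
  rw [hsum x₁, hsum x₂, Finset.mul_sum]
  apply Finset.sum_le_sum
  intro g _
  -- the three measure values
  set a₁ := A (D x₁ (e.symm (true, g))) S with ha₁
  set a₂ := A (D x₂ (e.symm (true, g))) S with ha₂
  set b := A (D x₁ (e.symm (false, g))) S with hbdef
  -- with dropout at i, the two inputs coincide
  have hfalse_eq : D x₁ (e.symm (false, g)) = D x₂ (e.symm (false, g)) := by
    funext j
    by_cases h : j = i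
    · subst h; simp [hD, hsymm false g j]
    · simp only [hD, hsymm false g j, dif_neg h]
      rw [hoff j h]
  -- adjacency of the two "kept" inputs
  have hadj12 : AdjOne (D x₁ (e.symm (true, g))) (D x₂ (e.symm (true, g))) := by
    refine ⟨i, ?_, ?_⟩
    · simp [hD, hsymm true g i]; exact hne
    · intro j hj
      simp only [hD, hsymm true g j, dif_neg hj]
      rcases g ⟨j, hj⟩ with _ | _ <;> simp [hoff j hj]
  have h1 : a₁ ≤ E * a₂ := hDP _ _ hadj12 S
  have h2 : a₁ ≤ E * b := by
    by_cases h0 : x₁ i = 0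
    · have heq : D x₁ (e.symm (true, g)) = D x₁ (e.symm (false, g)) := by
        funext j
        by_cases h : j = i
        · subst h; simp [hD, hsymm true g j, hsymm false g j, h0]
        · simp only [hD, hsymm true g j, hsymm false g j, dif_neg h]
      calc a₁ = b := by rw [ha₁, heq, ← hbdef]
        _ ≤ E * b := le_mul_of_one_le_left' hE1
    · have hadj1b : AdjOne (D x₁ (e.symm (true, g))) (D x₁ (e.symm (false, g))) := by
        refine ⟨i, ?_, ?_⟩
        · simp [hD, hsymm true g i, hsymm false g i]; exact h0
        · intro j hj
          simp only [hD, hsymm true g j, hsymm false g j, dif_neg hj]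
      exact hDP _ _ hadj1b S
  rw [← hfalse_eq]
  have := dropout_key P M E a₁ a₂ b hPM hE1 h1 h2
  calc P * W g * a₁ + M * W g * b = W g * (P * a₁ + M * b) := by ring
    _ ≤ W g * ((P * E + M) * (P * a₂ + M * b)) := mul_le_mul_right this _
    _ = (P * E + M) * (P * W g * a₂ + M * W g * b) := by ring
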